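/- Let U ⊆ ℝ² be open, let u : ℝ × U → ℝ be continuously differentiable (with continuous partials in all variables), and let T : U → (0,∞) be continuously differentiable with u(x + T(a,E), a, E) = u(x, a, E) for all x ∈ ℝ and (a,E) ∈ U. Define M(a,E) := ∫₀^{T(a,E)} u(x,a,E) dx. Then M is differentiable on U and, for all (a,E) ∈ U, ∫₀^{T(a,E)} (∂ₐT(a,E)·∂_E u(x,a,E) - ∂_E T(a,E)·∂ₐu(x,a,E)) dx = ∂ₐT(a,E)·∂_E M(a,E) - ∂_E T(a,E)·∂ₐM(a,E). -/

import Mathlib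

set_option maxHeartbeats 1000000

open MeasureTheory intervalIntegral

/-- The pairing identity `⟨φ₀, 1⟩ = {T,M}_{a,E}` for the mass
`M(a,E) = ∫₀^{T(a,E)} u dx` of a periodic family: `M` is differentiable and
`∫₀^T (T_a u_E - T_E u_a) dx = T_a M_E - T_E M_a`. -/
theorem stmt_10 (U : Set (ℝ × ℝ)) (hU : IsOpen U)
    (u : ℝ → ℝ → ℝ → ℝ)
    (hu : ContDiff ℝ 1 (fun q : ℝ × ℝ × ℝ => u q.1 q.2.1 q.2.2))
    (T : ℝ → ℝ → ℝ)
    (hT : ContDiff ℝ 1 (fun q : ℝ × ℝ => T q.1 q.2))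
    (hTpos : ∀ p ∈ U, 0 < T p.1 p.2)
    (hper : ∀ p ∈ U, ∀ x : ℝ, u (x + T p.1 p.2) p.1 p.2 = u x p.1 p.2) :
    ∀ p ∈ U,
      DifferentiableAt ℝ (fun q : ℝ × ℝ => ∫ x in (0:ℝ)..(T q.1 q.2), u x q.1 q.2) p ∧
      (∫ x in (0:ℝ)..(T p.1 p.2),
          (deriv (fun a => T a p.2) p.1 * deriv (fun E => u x p.1 E) p.2
            - deriv (fun E => T p.1 E) p.2 * deriv (fun a => u x a p.2) p.1))
        = deriv (fun a => T a p.2) p.1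
            * deriv (fun E => ∫ x in (0:ℝ)..(T p.1 E), u x p.1 E) p.2
          - deriv (fun E => T p.1 E) p.2
            * deriv (fun a => ∫ x in (0:ℝ)..(T a p.2), u x a p.2) p.1 := by
  rintro ⟨a₀, E₀⟩ hp
  clear hp hTpos hper hU
  dsimp only
  set f : ℝ × ℝ × ℝ → ℝ := fun q => u q.1 q.2.1 q.2.2 with hfdef
  have hfd : Differentiable ℝ f := hu.differentiable one_ne_zero
  have hfc : Continuous f := hfd.continuous
  have hf'c : Continuous fun q => fderiv ℝ f q := hu.continuous_fderiv one_ne_zero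
  set p₀ : ℝ × ℝ := (a₀, E₀) with hp₀
  set t₀ : ℝ := T a₀ E₀ with ht₀
  set c : ℝ := u t₀ a₀ E₀ with hc
  set ι : (ℝ × ℝ) →L[ℝ] ℝ × ℝ × ℝ := ContinuousLinearMap.inr ℝ ℝ (ℝ × ℝ) with hι
  set F' : (ℝ × ℝ) → ℝ → (ℝ × ℝ) →L[ℝ] ℝ :=
    fun p t => (fderiv ℝ f (t, p)).comp ι with hF'
  have hι_norm : ‖ι‖ ≤ 1 := by
    refine ContinuousLinearMap.opNorm_le_bound _ zero_le_one fun v => ?_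
    have : ι v = ((0 : ℝ), v) := rfl
    rw [this, one_mul]
    simp [Prod.norm_def]
  -- partial derivative of u in the parameters
  have hpart : ∀ (t : ℝ) (p : ℝ × ℝ),
      HasFDerivAt (fun p : ℝ × ℝ => u t p.1 p.2) (F' p t) p := by
    intro t p
    have h1 : HasFDerivAt (fun p : ℝ × ℝ => ((t, p) : ℝ × ℝ × ℝ)) ι p := by
      exact (hasFDerivAt_const (𝕜 := ℝ) t p).prodMk (hasFDerivAt_id (𝕜 := ℝ) p)
    exact ((hfd (t, p)).hasFDerivAt).comp p h1
  -- compactness bound for the dominated-convergence lemma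
  obtain ⟨C, hC⟩ : ∃ C, ∀ z ∈ (Set.uIcc (0:ℝ) t₀ ×ˢ Metric.closedBall p₀ 1),
      ‖fderiv ℝ f z‖ ≤ C := by
    have hcmp : IsCompact (Set.uIcc (0:ℝ) t₀ ×ˢ Metric.closedBall p₀ 1) :=
      isCompact_uIcc.prod (isCompact_closedBall p₀ 1)
    exact hcmp.exists_bound_of_continuousOn hf'c.continuousOn
  have hcu : ∀ p : ℝ × ℝ, Continuous fun x => u x p.1 p.2 := fun p =>
    hfc.comp (continuous_id.prodMk continuous_const)
  have hcF' : ∀ p : ℝ × ℝ, Continuous fun t => F' p t := fun p =>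
    (hf'c.comp (continuous_id.prodMk continuous_const)).clm_comp continuous_const
  -- differentiation under the integral sign, fixed endpoints
  have hK : HasFDerivAt (fun p : ℝ × ℝ => ∫ x in (0:ℝ)..t₀, u x p.1 p.2)
      (∫ x in (0:ℝ)..t₀, F' p₀ x) p₀ := by
    apply intervalIntegral.hasFDerivAt_integral_of_dominated_of_fderiv_le
      (F := fun p t => u t p.1 p.2) (F' := F') (bound := fun _ => C) (s := Metric.ball p₀ 1) (Metric.ball_mem_nhds p₀ one_pos)
    · exact Filter.Eventually.of_forall fun p => (hcu p).aestronglyMeasurable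
    · exact (hcu p₀).intervalIntegrable _ _
    · exact (hcF' p₀).aestronglyMeasurable
    · refine Filter.Eventually.of_forall fun t ht p hpball => ?_
      calc ‖F' p t‖ ≤ ‖fderiv ℝ f (t, p)‖ * ‖ι‖ := ContinuousLinearMap.opNorm_comp_le _ _
        _ ≤ ‖fderiv ℝ f (t, p)‖ * 1 :=
            mul_le_mul_of_nonneg_left hι_norm (norm_nonneg _)
        _ = ‖fderiv ℝ f (t, p)‖ := mul_one _
        _ ≤ C := hC (t, p) ⟨Set.uIoc_subset_uIcc ht, Metric.ball_subset_closedBall hpball⟩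
    · exact intervalIntegrable_const
    · exact Filter.Eventually.of_forall fun t ht p _ => hpart t p
  -- FTC part: derivative in the endpoint, jointly in all variables
  have hH : HasFDerivAt (fun q : ℝ × (ℝ × ℝ) => ∫ x in t₀..q.1, u x q.2.1 q.2.2)
      (c • ContinuousLinearMap.fst ℝ ℝ (ℝ × ℝ)) (t₀, p₀) := by
    apply HasFDerivAt.of_isLittleO
    rw [Asymptotics.isLittleO_iff]
    intro ε hε
    obtain ⟨δ, hδ, hδ'⟩ := Metric.continuousAt_iff.mp (hfc.continuousAt (x := (t₀, p₀))) ε hε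
    rw [Metric.eventually_nhds_iff]
    refine ⟨δ, hδ, ?_⟩
    rintro ⟨t, p⟩ hq
    have ht1 : |t - t₀| ≤ dist ((t, p) : ℝ × (ℝ × ℝ)) (t₀, p₀) := by
      rw [Prod.dist_eq]
      exact le_trans (le_of_eq (Real.dist_eq t t₀).symm) (le_max_left _ _)
    have hp1 : dist p p₀ ≤ dist ((t, p) : ℝ × (ℝ × ℝ)) (t₀, p₀) := by
      rw [Prod.dist_eq]; exact le_max_right _ _
    have key : ∀ x ∈ Set.uIoc t₀ t, ‖u x p.1 p.2 - c‖ ≤ ε := by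
      intro x hx
      have hx' : |x - t₀| ≤ |t - t₀| := by
        rcases le_total t₀ t with h | h
        · rw [Set.uIoc_of_le h] at hx
          rw [abs_of_nonneg (by linarith [hx.1.le]), abs_of_nonneg (by linarith)]
          linarith [hx.2]
        · rw [Set.uIoc_of_ge h] at hx
          rw [abs_of_nonpos (by linarith [hx.2]), abs_of_nonpos (by linarith)]
          linarith [hx.1.le]
      have hdx : dist ((x, p) : ℝ × (ℝ × ℝ)) (t₀, p₀) < δ := by
        rw [Prod.dist_eq]
        refine max_lt ?_ (lt_of_le_of_lt hp1 hq)
        rw [Real.dist_eq]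
        exact lt_of_le_of_lt (le_trans hx' ht1) hq
      have := hδ' hdx
      rw [Real.dist_eq] at this
      exact le_of_lt this
    have hint1 : IntervalIntegrable (fun x => u x p.1 p.2) volume t₀ t :=
      (hcu p).intervalIntegrable _ _
    have heq : (∫ x in t₀..t, u x p.1 p.2) - c * (t - t₀)
        = ∫ x in t₀..t, (u x p.1 p.2 - c) := by
      rw [intervalIntegral.integral_sub hint1 intervalIntegrable_const,
        intervalIntegral.integral_const, smul_eq_mul]
      ring
    have hbnd : ‖(∫ x in t₀..t, u x p.1 p.2) - c * (t - t₀)‖ ≤ ε * |t - t₀| := by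
      rw [heq]
      have := intervalIntegral.norm_integral_le_of_norm_le_const key
      linarith [this, abs_sub_comm t t₀ ▸ this]
    have hfin : ε * |t - t₀| ≤ ε * ‖((t, p) : ℝ × (ℝ × ℝ)) - (t₀, p₀)‖ := by
      apply mul_le_mul_of_nonneg_left _ hε.le
      calc |t - t₀| = ‖(((t, p) : ℝ × (ℝ × ℝ)) - (t₀, p₀)).1‖ := by
            simp [Real.norm_eq_abs]
        _ ≤ ‖((t, p) : ℝ × (ℝ × ℝ)) - (t₀, p₀)‖ := norm_fst_le _
    calc ‖(∫ x in t₀..t, u x p.1 p.2) - (∫ x in t₀..t₀, u x p₀.1 p₀.2)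
          - (c • ContinuousLinearMap.fst ℝ ℝ (ℝ × ℝ)) (((t, p) : ℝ × (ℝ × ℝ)) - (t₀, p₀))‖
        = ‖(∫ x in t₀..t, u x p.1 p.2) - c * (t - t₀)‖ := by
          rw [intervalIntegral.integral_same]
          simp [smul_eq_mul]
      _ ≤ ε * |t - t₀| := hbnd
      _ ≤ ε * ‖((t, p) : ℝ × (ℝ × ℝ)) - (t₀, p₀)‖ := hfin
  -- split the integral and add
  have hsplit : (fun q : ℝ × (ℝ × ℝ) => ∫ x in (0:ℝ)..q.1, u x q.2.1 q.2.2)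
      = fun q => (∫ x in (0:ℝ)..t₀, u x q.2.1 q.2.2) + ∫ x in t₀..q.1, u x q.2.1 q.2.2 := by
    funext q
    exact (intervalIntegral.integral_add_adjacent_intervals
      ((hcu q.2).intervalIntegrable _ _) ((hcu q.2).intervalIntegrable _ _)).symm
  have hG : HasFDerivAt (fun q : ℝ × (ℝ × ℝ) => ∫ x in (0:ℝ)..q.1, u x q.2.1 q.2.2)
      ((∫ x in (0:ℝ)..t₀, F' p₀ x).comp (ContinuousLinearMap.snd ℝ ℝ (ℝ × ℝ))
        + c • ContinuousLinearMap.fst ℝ ℝ (ℝ × ℝ)) (t₀, p₀) := by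
    rw [hsplit]
    exact (hK.comp (t₀, p₀) hasFDerivAt_snd).add hH
  -- chain rule with T
  have hTd : HasFDerivAt (fun q : ℝ × ℝ => T q.1 q.2)
      (fderiv ℝ (fun q : ℝ × ℝ => T q.1 q.2) p₀) p₀ :=
    (hT.differentiable one_ne_zero p₀).hasFDerivAt
  set DT := fderiv ℝ (fun q : ℝ × ℝ => T q.1 q.2) p₀ with hDT
  have hΦ : HasFDerivAt (fun p : ℝ × ℝ => ((T p.1 p.2, p) : ℝ × (ℝ × ℝ)))
      (DT.prod (ContinuousLinearMap.id ℝ (ℝ × ℝ))) p₀ := hTd.prodMk (hasFDerivAt_id p₀)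
  have hM : HasFDerivAt (fun p : ℝ × ℝ => ∫ x in (0:ℝ)..(T p.1 p.2), u x p.1 p.2)
      (((∫ x in (0:ℝ)..t₀, F' p₀ x).comp (ContinuousLinearMap.snd ℝ ℝ (ℝ × ℝ))
        + c • ContinuousLinearMap.fst ℝ ℝ (ℝ × ℝ)).comp
        (DT.prod (ContinuousLinearMap.id ℝ (ℝ × ℝ)))) p₀ := by
    exact HasFDerivAt.comp (f := fun p : ℝ × ℝ => ((T p.1 p.2, p) : ℝ × (ℝ × ℝ))) p₀ hG hΦ
  refine ⟨hM.differentiableAt, ?_⟩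
  -- directional derivatives
  have lineE : HasDerivAt (fun E => ((a₀, E) : ℝ × ℝ)) (((0 : ℝ), (1 : ℝ)) : ℝ × ℝ) E₀ :=
    (hasDerivAt_const E₀ a₀).prodMk (hasDerivAt_id E₀)
  have lineA : HasDerivAt (fun a => ((a, E₀) : ℝ × ℝ)) (((1 : ℝ), (0 : ℝ)) : ℝ × ℝ) a₀ :=
    (hasDerivAt_id a₀).prodMk (hasDerivAt_const a₀ E₀)
  have hTa : HasDerivAt (fun a => T a E₀) (DT (1, 0)) a₀ := by have h := hTd.comp_hasDerivAt a₀ lineA; exact h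
  have hTE : HasDerivAt (fun E => T a₀ E) (DT (0, 1)) E₀ := hTd.comp_hasDerivAt E₀ lineE
  have huA : ∀ x : ℝ, HasDerivAt (fun a => u x a E₀) (F' p₀ x (1, 0)) a₀ :=
    fun x => by have h := (hpart x p₀).comp_hasDerivAt a₀ lineA; exact h
  have huE : ∀ x : ℝ, HasDerivAt (fun E => u x a₀ E) (F' p₀ x (0, 1)) E₀ :=
    fun x => (hpart x p₀).comp_hasDerivAt E₀ lineE
  have hMA : HasDerivAt (fun a => ∫ x in (0:ℝ)..(T a E₀), u x a E₀)
      ((((∫ x in (0:ℝ)..t₀, F' p₀ x).comp (ContinuousLinearMap.snd ℝ ℝ (ℝ × ℝ))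
        + c • ContinuousLinearMap.fst ℝ ℝ (ℝ × ℝ)).comp
        (DT.prod (ContinuousLinearMap.id ℝ (ℝ × ℝ)))) (1, 0)) a₀ := by
    simpa [Function.comp_def] using hM.comp_hasDerivAt a₀ lineA
  have hME : HasDerivAt (fun E => ∫ x in (0:ℝ)..(T a₀ E), u x a₀ E)
      ((((∫ x in (0:ℝ)..t₀, F' p₀ x).comp (ContinuousLinearMap.snd ℝ ℝ (ℝ × ℝ))
        + c • ContinuousLinearMap.fst ℝ ℝ (ℝ × ℝ)).comp
        (DT.prod (ContinuousLinearMap.id ℝ (ℝ × ℝ)))) (0, 1)) E₀ := by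
    simpa [Function.comp_def] using hM.comp_hasDerivAt E₀ lineE
  -- evaluate the linear maps
  have hintsF' : IntervalIntegrable (F' p₀) volume 0 t₀ := (hcF' p₀).intervalIntegrable _ _
  have happly : ∀ v : ℝ × ℝ, (∫ x in (0:ℝ)..t₀, F' p₀ x) v = ∫ x in (0:ℝ)..t₀, F' p₀ x v :=
    fun v => ContinuousLinearMap.intervalIntegral_apply hintsF' v
  have hevalE : (((∫ x in (0:ℝ)..t₀, F' p₀ x).comp (ContinuousLinearMap.snd ℝ ℝ (ℝ × ℝ))
        + c • ContinuousLinearMap.fst ℝ ℝ (ℝ × ℝ)).comp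
        (DT.prod (ContinuousLinearMap.id ℝ (ℝ × ℝ)))) ((0 : ℝ), (1 : ℝ))
      = c * DT (0, 1) + ∫ x in (0:ℝ)..t₀, F' p₀ x (0, 1) := by
    simp [ContinuousLinearMap.add_apply, ContinuousLinearMap.comp_apply,
      ContinuousLinearMap.prod_apply, ContinuousLinearMap.smul_apply, smul_eq_mul,
      happly]
    ring
  have hevalA : (((∫ x in (0:ℝ)..t₀, F' p₀ x).comp (ContinuousLinearMap.snd ℝ ℝ (ℝ × ℝ))
        + c • ContinuousLinearMap.fst ℝ ℝ (ℝ × ℝ)).comp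
        (DT.prod (ContinuousLinearMap.id ℝ (ℝ × ℝ)))) ((1 : ℝ), (0 : ℝ))
      = c * DT (1, 0) + ∫ x in (0:ℝ)..t₀, F' p₀ x (1, 0) := by
    simp [ContinuousLinearMap.add_apply, ContinuousLinearMap.comp_apply,
      ContinuousLinearMap.prod_apply, ContinuousLinearMap.smul_apply, smul_eq_mul,
      happly]
    ring
  -- integrability of the applied derivatives
  have hIE : IntervalIntegrable (fun x => F' p₀ x ((0 : ℝ), (1 : ℝ))) volume 0 t₀ :=
    ((hcF' p₀).clm_apply continuous_const).intervalIntegrable _ _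
  have hIA : IntervalIntegrable (fun x => F' p₀ x ((1 : ℝ), (0 : ℝ))) volume 0 t₀ :=
    ((hcF' p₀).clm_apply continuous_const).intervalIntegrable _ _
  -- rewrite the left-hand side integrand
  have hcongr : (∫ x in (0:ℝ)..t₀,
        (deriv (fun a => T a E₀) a₀ * deriv (fun E => u x a₀ E) E₀
          - deriv (fun E => T a₀ E) E₀ * deriv (fun a => u x a E₀) a₀))
      = DT (1, 0) * (∫ x in (0:ℝ)..t₀, F' p₀ x (0, 1))
        - DT (0, 1) * (∫ x in (0:ℝ)..t₀, F' p₀ x (1, 0)) := by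
    rw [show (fun x => deriv (fun a => T a E₀) a₀ * deriv (fun E => u x a₀ E) E₀
          - deriv (fun E => T a₀ E) E₀ * deriv (fun a => u x a E₀) a₀)
        = fun x => DT (1, 0) * F' p₀ x (0, 1) - DT (0, 1) * F' p₀ x (1, 0) from
      funext fun x => by rw [hTa.deriv, hTE.deriv, (huE x).deriv, (huA x).deriv]]
    rw [intervalIntegral.integral_sub (hIE.const_mul _) (hIA.const_mul _),
      intervalIntegral.integral_const_mul, intervalIntegral.integral_const_mul]
  rw [hcongr, hTa.deriv, hTE.deriv, hME.deriv, hMA.deriv, hevalE, hevalA]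
  ring
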